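/- Let C be a Krull–Schmidt abelian category with enough projectives and let R be an additive full subcategory of C. Then R is a resolving subcategory of C if and only if all of the following hold: (R'1) every projective object of C belongs to R; (R'2) for every short exact sequence 0 → X → E → Y → 0 with X and Y indecomposable objects of R, one has E in R; and (R'3) for every short exact sequence 0 → K → M → Y → 0 with M in R and Y an indecomposable object of R, one has K in R. -/

import Mathlib

open CategoryTheory Limits

attribute [local instance] CategoryTheory.Abelian.hasFiniteBiproducts

universe v u

variable {C : Type u} [Category.{v} C] [Abelian C]

/-- A class of objects of `C` is an *additive subcategory* if it is closed under
isomorphisms, finite direct sums and direct summands. -/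
def IsAdditiveSubcat (P : C → Prop) : Prop :=
  (∀ ⦃X Y : C⦄, (X ≅ Y) → P X → P Y) ∧
  (∀ ⦃X Y : C⦄, P X → P Y → P (X ⊞ Y)) ∧
  (∀ ⦃X Y : C⦄, P (X ⊞ Y) → P X ∧ P Y)

/-- A class of objects `P` *generates* `C` if every object of `C` admits an epimorphism
from an object of `P`. -/
def GeneratesCat (P : C → Prop) : Prop :=
  ∀ X : C, ∃ (G : C) (f : G ⟶ X), P G ∧ Epi f

/-- `P` is closed under extensions: for every short exact sequence
`0 → A → E → B → 0` with `A, B` in `P`, `E` is in `P`. -/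
def ClosedUnderExtensions (P : C → Prop) : Prop :=
  ∀ S : ShortComplex C, S.ShortExact → P S.X₁ → P S.X₃ → P S.X₂

/-- `P` is closed under kernels of epimorphisms: for every short exact sequence
`0 → K → M → N → 0` with `M, N` in `P`, `K` is in `P`. -/
def ClosedUnderKernelsOfEpis (P : C → Prop) : Prop :=
  ∀ S : ShortComplex C, S.ShortExact → P S.X₂ → P S.X₃ → P S.X₁

/-- A *resolving subcategory* of `C`: an additive class of objects which generates `C`,
is closed under extensions and closed under kernels of epimorphisms. -/
def IsResolving (P : C → Prop) : Prop :=
  IsAdditiveSubcat P ∧ GeneratesCat P ∧ ClosedUnderExtensions P ∧ ClosedUnderKernelsOfEpis P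

/-- The *resolving closure* of a class of objects: the intersection of all resolving
subcategories containing it (i.e. the smallest such subcategory). -/
def ResolvingClosure (X : C → Prop) : C → Prop :=
  fun A => ∀ P : C → Prop, IsResolving P → (∀ B, X B → P B) → P A

/-- The *additive closure* of a class of objects: the intersection of all additive
subcategories containing it. -/
def AdditiveClosure (P : C → Prop) : C → Prop :=
  fun A => ∀ Q : C → Prop, IsAdditiveSubcat Q → (∀ B, P B → Q B) → Q A

/-- `C` is a *Krull–Schmidt* category: every object is isomorphic to a finite direct sum
of indecomposable objects with local endomorphism rings. -/
def IsKrullSchmidtCat (C : Type u) [Category.{v} C] [Abelian C] : Prop :=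
  ∀ X : C, ∃ (n : ℕ) (f : Fin n → C),
    (∀ i, Indecomposable (f i) ∧ IsLocalRing (End (f i))) ∧ Nonempty (X ≅ ⨁ f)

/-- `Y` admits at most `p₀` indecomposable direct summands. -/
def AtMostIndecSummands (p₀ : ℕ) (Y : C) : Prop :=
  ∃ (n : ℕ) (f : Fin n → C), n ≤ p₀ ∧ (∀ i, Indecomposable (f i)) ∧ Nonempty (Y ≅ ⨁ f)

/-- Condition `(Mid)_{p₀}`: for every short exact sequence `0 → X → Y → Z → 0` with `X`, `Z`
indecomposable, the middle object `Y` admits at most `p₀` indecomposable direct summands. -/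
def SatisfiesMid (C : Type u) [Category.{v} C] [Abelian C] (p₀ : ℕ) : Prop :=
  ∀ S : ShortComplex C, S.ShortExact → Indecomposable S.X₁ → Indecomposable S.X₃ →
    AtMostIndecSummands p₀ S.X₂


namespace Stmt8Aux

/-- Existence of a short exact sequence `0 → A → E → B → 0`. -/
def SES3 (A E B : C) : Prop :=
  ∃ S : ShortComplex C, S.ShortExact ∧ S.X₁ = A ∧ S.X₂ = E ∧ S.X₃ = B

lemma ses3_of {A E B : C} (f : A ⟶ E) (g : E ⟶ B) (w : f ≫ g = 0)
    (h : (ShortComplex.mk f g w).ShortExact) : SES3 A E B :=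
  ⟨_, h, rfl, rfl, rfl⟩

lemma SES3.iso {A E B A' E' B' : C} (h : SES3 A E B)
    (e₁ : A ≅ A') (e₂ : E ≅ E') (e₃ : B ≅ B') : SES3 A' E' B' := by
  obtain ⟨S, hS, h1, h2, h3⟩ := h
  subst h1; subst h2; subst h3
  refine ses3_of (e₁.inv ≫ S.f ≫ e₂.hom) (e₂.inv ≫ S.g ≫ e₃.hom)
    (by simp [S.zero]) ?_
  refine ShortComplex.shortExact_of_iso ?_ hS
  exact ShortComplex.isoMk e₁ e₂ e₃ (by simp) (by simp)

/-- The kernel short exact sequence of an epimorphism. -/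
lemma shortExact_kernel {E B : C} (p : E ⟶ B) [Epi p] :
    (ShortComplex.mk (kernel.ι p) p (kernel.condition p)).ShortExact := by
  refine ShortComplex.ShortExact.mk' ?_ inferInstance inferInstance
  exact ShortComplex.exact_of_f_is_kernel _ (kernelIsKernel p)

/-- The cokernel short exact sequence of a monomorphism. -/
lemma shortExact_cokernel {A E : C} (m : A ⟶ E) [Mono m] :
    (ShortComplex.mk m (cokernel.π m) (cokernel.condition m)).ShortExact := by
  refine ShortComplex.ShortExact.mk' ?_ inferInstance inferInstance
  exact ShortComplex.exact_of_g_is_cokernel _ (cokernelIsCokernel m)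

lemma nonempty_iso_kernel {S : ShortComplex C} (hS : S.ShortExact) :
    Nonempty (S.X₁ ≅ kernel S.g) :=
  ⟨IsLimit.conePointUniqueUpToIso hS.fIsKernel (limit.isLimit _)⟩

lemma nonempty_iso_cokernel {S : ShortComplex C} (hS : S.ShortExact) :
    Nonempty (S.X₃ ≅ cokernel S.f) :=
  ⟨IsColimit.coconePointUniqueUpToIso hS.gIsCokernel (colimit.isColimit _)⟩


/-- Left split short exact sequence of a biproduct decomposition. -/
lemma shortExact_splitL {B B₁ B₂ : C} (e : B ≅ B₁ ⊞ B₂) :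
    (ShortComplex.mk (biprod.inl ≫ e.inv) (e.hom ≫ biprod.snd)
      (by simp)).ShortExact := by
  have s : (ShortComplex.mk (biprod.inl ≫ e.inv) (e.hom ≫ biprod.snd)
      (by simp)).Splitting :=
    { r := e.hom ≫ biprod.fst
      s := biprod.inr ≫ e.inv
      f_r := by simp
      s_g := by simp
      id := by
        have h := biprod.total (X := B₁) (Y := B₂)
        calc (e.hom ≫ biprod.fst) ≫ biprod.inl ≫ e.inv
              + (e.hom ≫ biprod.snd) ≫ biprod.inr ≫ e.inv
            = e.hom ≫ (biprod.fst ≫ biprod.inl + biprod.snd ≫ biprod.inr) ≫ e.inv := by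
              simp only [Preadditive.comp_add, Preadditive.add_comp, Category.assoc]
          _ = 𝟙 B := by rw [h]; simp }
  exact ShortComplex.ShortExact.mk' s.exact s.mono_f s.epi_g

/-- Right split short exact sequence of a biproduct decomposition. -/
lemma shortExact_splitR {B B₁ B₂ : C} (e : B ≅ B₁ ⊞ B₂) :
    (ShortComplex.mk (biprod.inr ≫ e.inv) (e.hom ≫ biprod.fst)
      (by simp)).ShortExact := by
  have s : (ShortComplex.mk (biprod.inr ≫ e.inv) (e.hom ≫ biprod.fst)
      (by simp)).Splitting :=
    { r := e.hom ≫ biprod.snd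
      s := biprod.inl ≫ e.inv
      f_r := by simp
      s_g := by simp
      id := by
        have h := biprod.total (X := B₁) (Y := B₂)
        calc (e.hom ≫ biprod.snd) ≫ biprod.inr ≫ e.inv
              + (e.hom ≫ biprod.fst) ≫ biprod.inl ≫ e.inv
            = e.hom ≫ (biprod.snd ≫ biprod.inr + biprod.fst ≫ biprod.inl) ≫ e.inv := by
              simp only [Preadditive.comp_add, Preadditive.add_comp, Category.assoc]
          _ = 𝟙 B := by rw [add_comm, h]; simp }
  exact ShortComplex.ShortExact.mk' s.exact s.mono_f s.epi_g

/-- Kernel of a composition of epimorphisms: `0 → ker g → ker (g ≫ q) → ker q → 0`. -/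
lemma lemA {E B B' : C} (g : E ⟶ B) (q : B ⟶ B') [Epi g] [Epi q] :
    SES3 (kernel g) (kernel (g ≫ q)) (kernel q) := by
  have hψw : kernel.ι g ≫ g ≫ q = 0 := by
    rw [← Category.assoc, kernel.condition, zero_comp]
  have hφw : (kernel.ι (g ≫ q) ≫ g) ≫ q = 0 := by
    rw [Category.assoc, kernel.condition]
  refine ses3_of (kernel.lift (g ≫ q) (kernel.ι g) hψw)
    (kernel.lift q (kernel.ι (g ≫ q) ≫ g) hφw) ?_ ?_
  · rw [← cancel_mono (kernel.ι q)]
    simp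
  · refine ShortComplex.ShortExact.mk' ?_ ?_ ?_
    · rw [ShortComplex.exact_iff_exact_up_to_refinements]
      intro T x₂ hx₂
      have h1 : (x₂ ≫ kernel.ι (g ≫ q)) ≫ g = 0 := by
        have := hx₂ =≫ kernel.ι q
        simpa using this
      refine ⟨T, 𝟙 T, inferInstance, kernel.lift g (x₂ ≫ kernel.ι (g ≫ q)) h1, ?_⟩
      rw [Category.id_comp, ← cancel_mono (kernel.ι (g ≫ q))]
      simp
    · refine mono_of_mono_fac
        (kernel.lift_ι (g ≫ q) (kernel.ι g) hψw)
    · rw [epi_iff_surjective_up_to_refinements]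
      intro T y
      obtain ⟨T', π, hπ, x, fac⟩ := surjective_up_to_refinements_of_epi g (y ≫ kernel.ι q)
      have hx : x ≫ g ≫ q = 0 := by
        rw [← Category.assoc, ← fac]
        simp
      refine ⟨T', π, hπ, kernel.lift (g ≫ q) x hx, ?_⟩
      rw [← cancel_mono (kernel.ι q)]
      simp only [Category.assoc, kernel.lift_ι]
      have hre : kernel.lift (g ≫ q) x hx ≫ kernel.ι (g ≫ q) ≫ g = x ≫ g := by
        rw [← Category.assoc, kernel.lift_ι]
      rw [hre]; exact fac

/-- Cokernel of a composition where the second is a monomorphism: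
`0 → coker a → coker (a ≫ m) → coker m → 0`. -/
lemma lemB {A' A E : C} (a : A' ⟶ A) (m : A ⟶ E) [Mono m] :
    SES3 (cokernel a) (cokernel (a ≫ m)) (cokernel m) := by
  have hφw : a ≫ m ≫ cokernel.π (a ≫ m) = 0 := by
    rw [← Category.assoc, cokernel.condition]
  have hψw : (a ≫ m) ≫ cokernel.π m = 0 := by
    rw [Category.assoc, cokernel.condition, comp_zero]
  have hexact₁ : (ShortComplex.mk (a ≫ m) (cokernel.π (a ≫ m)) (cokernel.condition _)).Exact :=
    ShortComplex.exact_of_g_is_cokernel _ (cokernelIsCokernel _)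
  have hexact₂ : (ShortComplex.mk m (cokernel.π m) (cokernel.condition _)).Exact :=
    ShortComplex.exact_of_g_is_cokernel _ (cokernelIsCokernel _)
  refine ses3_of (cokernel.desc a (m ≫ cokernel.π (a ≫ m)) hφw)
    (cokernel.desc (a ≫ m) (cokernel.π m) hψw) ?_ ?_
  · rw [← cancel_epi (cokernel.π a)]
    simp
  · refine ShortComplex.ShortExact.mk' ?_ ?_ ?_
    · rw [ShortComplex.exact_iff_exact_up_to_refinements]
      intro T x₂ hx₂
      obtain ⟨T', ρ, hρ, y, fac⟩ :=
        surjective_up_to_refinements_of_epi (cokernel.π (a ≫ m)) x₂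
      replace hx₂ : x₂ ≫ cokernel.desc (a ≫ m) (cokernel.π m) hψw = 0 := hx₂
      have hy : y ≫ cokernel.π m = 0 := by
        have h := fac =≫ cokernel.desc (a ≫ m) (cokernel.π m) hψw
        simp only [Category.assoc, cokernel.π_desc] at h
        rw [← h, hx₂, comp_zero]
      obtain ⟨T'', ρ', hρ', u, fac'⟩ := hexact₂.exact_up_to_refinements y hy
      refine ⟨T'', ρ' ≫ ρ, epi_comp _ _, u ≫ cokernel.π a, ?_⟩
      dsimp at fac' ⊢
      rw [Category.assoc, fac, reassoc_of% fac']
      simp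
    · refine Preadditive.mono_of_cancel_zero _ ?_
      intro T t ht
      obtain ⟨T', ρ, hρ, x, fac⟩ := surjective_up_to_refinements_of_epi (cokernel.π a) t
      replace ht : t ≫ cokernel.desc a (m ≫ cokernel.π (a ≫ m)) hφw = 0 := ht
      have hx : (x ≫ m) ≫ cokernel.π (a ≫ m) = 0 := by
        have h := fac =≫ cokernel.desc a (m ≫ cokernel.π (a ≫ m)) hφw
        simp only [Category.assoc, cokernel.π_desc] at h
        rw [Category.assoc, ← h, ht, comp_zero]
      obtain ⟨T'', ρ', hρ', u, fac'⟩ := hexact₁.exact_up_to_refinements (x ≫ m) hx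
      dsimp at fac'
      have hxa : ρ' ≫ x = u ≫ a := by
        rw [← cancel_mono m]
        simpa using fac'
      have h2 : ρ' ≫ ρ ≫ t = 0 := by
        rw [fac, reassoc_of% hxa]; simp
      exact zero_of_epi_comp ρ (zero_of_epi_comp ρ' h2)
    · refine epi_of_epi_fac (f := cokernel.π (a ≫ m)) (cokernel.π_desc _ _ _)


/-- Mayer-Vietoris: for a mono `m : A ⟶ E` with `A ≅ A₁ ⊞ A₂` there is a short exact
sequence `0 ⟶ E ⟶ E/A₂ ⊞ E/A₁ ⟶ E/A ⟶ 0`. -/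
lemma lemMV {A A₁ A₂ E : C} (e : A ≅ A₁ ⊞ A₂) (m : A ⟶ E) [Mono m] :
    SES3 E (cokernel ((biprod.inr ≫ e.inv) ≫ m) ⊞ cokernel ((biprod.inl ≫ e.inv) ≫ m))
      (cokernel m) := by
  set c₁ : A₂ ⟶ E := (biprod.inr ≫ e.inv) ≫ m with hc₁
  set c₂ : A₁ ⟶ E := (biprod.inl ≫ e.inv) ≫ m with hc₂
  have w₁ : c₁ ≫ cokernel.π m = 0 := by
    rw [hc₁, Category.assoc, cokernel.condition, comp_zero]
  have w₂ : c₂ ≫ cokernel.π m = 0 := by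
    rw [hc₂, Category.assoc, cokernel.condition, comp_zero]
  set π₁ := cokernel.π c₁ with hπ₁
  set π₂ := cokernel.π c₂ with hπ₂
  set g₁ := cokernel.desc c₁ (cokernel.π m) w₁ with hg₁
  set g₂ := cokernel.desc c₂ (cokernel.π m) w₂ with hg₂
  have hex₁ : (ShortComplex.mk c₁ π₁ (cokernel.condition _)).Exact :=
    ShortComplex.exact_of_g_is_cokernel _ (cokernelIsCokernel _)
  have hex₂ : (ShortComplex.mk c₂ π₂ (cokernel.condition _)).Exact :=
    ShortComplex.exact_of_g_is_cokernel _ (cokernelIsCokernel _)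
  have hexm : (ShortComplex.mk m (cokernel.π m) (cokernel.condition m)).Exact :=
    ShortComplex.exact_of_g_is_cokernel _ (cokernelIsCokernel _)
  refine ses3_of (biprod.lift π₁ π₂) (biprod.desc g₁ (-g₂)) ?_ ?_
  · rw [biprod.lift_desc, hπ₁, hπ₂, hg₁, hg₂]
    simp
  · refine ShortComplex.ShortExact.mk' ?_ ?_ ?_
    · -- exactness in the middle
      rw [ShortComplex.exact_iff_exact_up_to_refinements]
      intro T x hx
      replace hx : x ≫ biprod.desc g₁ (-g₂) = 0 := hx
      have hdesc : biprod.fst ≫ g₁ - biprod.snd ≫ g₂ = biprod.desc g₁ (-g₂) := by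
        rw [biprod.desc_eq]
        simp only [Preadditive.comp_neg]
        abel
      have hx' : x ≫ biprod.fst ≫ g₁ = x ≫ biprod.snd ≫ g₂ := by
        have h9 : x ≫ (biprod.fst ≫ g₁ - biprod.snd ≫ g₂) = 0 := by
          rw [hdesc]; exact hx
        rw [Preadditive.comp_sub, sub_eq_zero] at h9
        simpa only [Category.assoc] using h9
      obtain ⟨T₁, ρ₁, hρ₁, y₁, fac₁⟩ :=
        surjective_up_to_refinements_of_epi π₁ (x ≫ biprod.fst)
      obtain ⟨T₂, ρ₂, hρ₂, y₂, fac₂⟩ :=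
        surjective_up_to_refinements_of_epi π₂ (ρ₁ ≫ x ≫ biprod.snd)
      have hpg₁ : π₁ ≫ g₁ = cokernel.π m := by
        rw [hπ₁, hg₁]; exact cokernel.π_desc _ _ _
      have hpg₂ : π₂ ≫ g₂ = cokernel.π m := by
        rw [hπ₂, hg₂]; exact cokernel.π_desc _ _ _
      have e₁ : y₁ ≫ cokernel.π m = ρ₁ ≫ x ≫ biprod.fst ≫ g₁ := by
        have h := fac₁ =≫ g₁
        simp only [Category.assoc] at h
        rw [hpg₁] at h
        exact h.symm
      have e₂ : y₂ ≫ cokernel.π m = ρ₂ ≫ ρ₁ ≫ x ≫ biprod.snd ≫ g₂ := by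
        have h := fac₂ =≫ g₂
        simp only [Category.assoc] at h
        rw [hpg₂] at h
        exact h.symm
      have hdiff : (ρ₂ ≫ y₁ - y₂) ≫ cokernel.π m = 0 := by
        rw [Preadditive.sub_comp, Category.assoc, e₁, e₂, hx', sub_self]
      obtain ⟨T₃, ρ₃, hρ₃, u, fac₃⟩ := hexm.exact_up_to_refinements (ρ₂ ≫ y₁ - y₂) hdiff
      replace fac₃ : ρ₃ ≫ (ρ₂ ≫ y₁ - y₂) = u ≫ m := fac₃
      have fac₃' : ρ₃ ≫ ρ₂ ≫ y₁ = u ≫ m + ρ₃ ≫ y₂ := by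
        rw [Preadditive.comp_sub] at fac₃
        rw [← sub_eq_iff_eq_add]
        simpa only [Category.assoc] using fac₃
      have hz₁ : biprod.inr ≫ e.inv ≫ m ≫ π₁ = 0 := by
        have h0 := cokernel.condition c₁
        rw [hc₁] at h0
        simpa only [Category.assoc] using h0
      have hz₂ : biprod.inl ≫ e.inv ≫ m ≫ π₂ = 0 := by
        have h0 := cokernel.condition c₂
        rw [hc₂] at h0
        simpa only [Category.assoc] using h0
      have hkey : u ≫ m ≫ π₁ = u ≫ e.hom ≫ biprod.fst ≫ biprod.inl ≫ e.inv ≫ m ≫ π₁ := by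
        have htot : (𝟙 (A₁ ⊞ A₂) : A₁ ⊞ A₂ ⟶ A₁ ⊞ A₂)
            = biprod.fst ≫ biprod.inl + biprod.snd ≫ biprod.inr := (biprod.total).symm
        calc u ≫ m ≫ π₁ = u ≫ (e.hom ≫ 𝟙 (A₁ ⊞ A₂) ≫ e.inv) ≫ m ≫ π₁ := by simp
          _ = u ≫ e.hom ≫ biprod.fst ≫ biprod.inl ≫ e.inv ≫ m ≫ π₁
              + u ≫ e.hom ≫ biprod.snd ≫ biprod.inr ≫ e.inv ≫ m ≫ π₁ := by
                rw [htot]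
                simp only [Preadditive.add_comp, Preadditive.comp_add, Category.assoc]
          _ = u ≫ e.hom ≫ biprod.fst ≫ biprod.inl ≫ e.inv ≫ m ≫ π₁ := by
                rw [hz₁]
                simp
      refine ⟨T₃, ρ₃ ≫ ρ₂ ≫ ρ₁, epi_comp _ _,
        ρ₃ ≫ y₂ + (u ≫ e.hom ≫ biprod.fst) ≫ (biprod.inl ≫ e.inv) ≫ m, ?_⟩
      show (ρ₃ ≫ ρ₂ ≫ ρ₁) ≫ x
          = (ρ₃ ≫ y₂ + (u ≫ e.hom ≫ biprod.fst) ≫ (biprod.inl ≫ e.inv) ≫ m)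
            ≫ biprod.lift π₁ π₂
      apply biprod.hom_ext
      · simp only [Category.assoc, biprod.lift_fst, Preadditive.add_comp]
        have F1 : ρ₃ ≫ ρ₂ ≫ ρ₁ ≫ x ≫ biprod.fst = ρ₃ ≫ ρ₂ ≫ y₁ ≫ π₁ := by
          have h6 := ρ₃ ≫= (ρ₂ ≫= fac₁)
          simpa only [Category.assoc] using h6
        have F2 : ρ₃ ≫ ρ₂ ≫ y₁ ≫ π₁ = u ≫ m ≫ π₁ + ρ₃ ≫ y₂ ≫ π₁ := by
          have h7 := fac₃' =≫ π₁
          simpa only [Category.assoc, Preadditive.add_comp] using h7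
        rw [F1, F2, hkey, add_comm]
      · simp only [Category.assoc, biprod.lift_snd, Preadditive.add_comp]
        rw [hz₂]
        simp only [comp_zero, add_zero]
        have h8 := ρ₃ ≫= fac₂
        simpa only [Category.assoc] using h8
    · -- mono
      refine Preadditive.mono_of_cancel_zero _ ?_
      intro T t ht
      replace ht : t ≫ biprod.lift π₁ π₂ = 0 := ht
      have h₁ : t ≫ π₁ = 0 := by
        have h0 := ht =≫ biprod.fst
        simpa using h0
      have h₂ : t ≫ π₂ = 0 := by
        have h0 := ht =≫ biprod.snd
        simpa using h0
      obtain ⟨T', ρ, hρ, u, fac⟩ := hex₁.exact_up_to_refinements t h₁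
      replace fac : ρ ≫ t = u ≫ c₁ := fac
      have h3 : (u ≫ c₁) ≫ π₂ = 0 := by
        rw [← fac, Category.assoc, h₂, comp_zero]
      obtain ⟨T'', ρ', hρ', v, fac'⟩ := hex₂.exact_up_to_refinements (u ≫ c₁) h3
      replace fac' : ρ' ≫ u ≫ c₁ = v ≫ c₂ := fac'
      have hcanc : ρ' ≫ u ≫ biprod.inr ≫ e.inv = v ≫ biprod.inl ≫ e.inv := by
        rw [← cancel_mono m]
        simpa only [hc₁, hc₂, Category.assoc] using fac'
      have hu : ρ' ≫ u = 0 := by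
        have h4 := hcanc =≫ (e.hom ≫ biprod.snd)
        simpa using h4
      have h5 : ρ' ≫ ρ ≫ t = 0 := by
        rw [fac, ← Category.assoc, hu, zero_comp]
      exact zero_of_epi_comp ρ (zero_of_epi_comp ρ' h5)
    · -- epi
      haveI : Epi g₁ := epi_of_epi_fac (cokernel.π_desc c₁ (cokernel.π m) w₁)
      exact epi_of_epi_fac (biprod.inl_desc g₁ (-g₂))

/-- `X` is a direct sum of `n` indecomposables. -/
def SumInd (n : ℕ) (X : C) : Prop :=
  ∃ f : Fin n → C, (∀ i, Indecomposable (f i)) ∧ Nonempty (X ≅ ⨁ f)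

lemma indec_of_iso {X Y : C} (h : Indecomposable X) (e : X ≅ Y) : Indecomposable Y :=
  ⟨fun hz => h.1 (hz.of_iso e), fun B Z i => h.2 B Z (e ≪≫ i)⟩

lemma sumInd_zero {X : C} (h : SumInd 0 X) : IsZero X := by
  obtain ⟨f, -, ⟨e⟩⟩ := h
  have hz : IsZero (⨁ f) := by
    rw [IsZero.iff_id_eq_zero]
    apply biproduct.hom_ext
    intro j
    exact j.elim0
  exact hz.of_iso e

lemma sumInd_one {X : C} (h : SumInd 1 X) : Indecomposable X := by
  obtain ⟨f, hf, ⟨e⟩⟩ := h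
  have e' : (⨁ f) ≅ f 0 := by
    refine ⟨biproduct.π f 0, biproduct.ι f 0, ?_, by simp⟩
    apply biproduct.hom_ext'
    intro j
    have hj : j = 0 := Subsingleton.elim _ _
    subst hj
    simp
  exact indec_of_iso (hf 0) (e'.symm ≪≫ e.symm)

/-- Peeling off one indecomposable summand. -/
lemma sumInd_succ {n : ℕ} {X : C} (h : SumInd (n + 1) X) :
    ∃ X₁ X₂ : C, Indecomposable X₁ ∧ SumInd n X₂ ∧ Nonempty (X ≅ X₁ ⊞ X₂) := by
  obtain ⟨f, hf, ⟨e⟩⟩ := h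
  refine ⟨f 0, ⨁ (fun i : Fin n => f i.succ), hf 0,
    ⟨_, fun i => hf _, ⟨Iso.refl _⟩⟩, ⟨e ≪≫ ?_⟩⟩
  refine ⟨biprod.lift (biproduct.π f 0) (biproduct.lift fun i => biproduct.π f i.succ),
    biprod.desc (biproduct.ι f 0) (biproduct.desc fun i => biproduct.ι f i.succ), ?_, ?_⟩
  · rw [biprod.lift_desc, biproduct.lift_desc, ← biproduct.total, Fin.sum_univ_succ]
  · apply biprod.hom_ext
    · apply biprod.hom_ext'
      · simp
      · apply biproduct.hom_ext'
        intro j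
        simp [biproduct.ι_π, Fin.succ_ne_zero]
    · apply biprod.hom_ext'
      · apply biproduct.hom_ext
        intro j
        simp [biproduct.ι_π, (Fin.succ_ne_zero j).symm]
      · apply biproduct.hom_ext'
        intro j
        apply biproduct.hom_ext
        intro k
        simp [biproduct.ι_π, Fin.succ_inj]

lemma iso_of_isZero_X₁ {S : ShortComplex C} (hS : S.ShortExact) (h : IsZero S.X₁) :
    Nonempty (S.X₂ ≅ S.X₃) := by
  have hf : S.f = 0 := h.eq_of_src _ _
  have : Mono S.g := hS.exact.mono_g hf
  have := hS.epi_g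
  have : IsIso S.g := isIso_of_mono_of_epi _
  exact ⟨asIso S.g⟩

lemma iso_of_isZero_X₃ {S : ShortComplex C} (hS : S.ShortExact) (h : IsZero S.X₃) :
    Nonempty (S.X₁ ≅ S.X₂) := by
  have hg : S.g = 0 := h.eq_of_tgt _ _
  have : Epi S.f := hS.exact.epi_f hg
  have := hS.mono_f
  have : IsIso S.f := isIso_of_mono_of_epi _
  exact ⟨asIso S.f⟩


section MainLemmas

variable {R : C → Prop}

lemma ks_sumInd (hKS : IsKrullSchmidtCat C) (X : C) : ∃ n, SumInd n X := by
  obtain ⟨n, f, h, e⟩ := hKS X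
  exact ⟨n, f, fun i => (h i).1, e⟩

lemma kerClosed (hKS : IsKrullSchmidtCat C) (hR : IsAdditiveSubcat R)
    (h3 : ∀ S : ShortComplex C, S.ShortExact → R S.X₂ → R S.X₃ → Indecomposable S.X₃ →
      R S.X₁) :
    ClosedUnderKernelsOfEpis R := by
  have aux : ∀ n (E B : C) (g : E ⟶ B), Epi g → R E → R B → SumInd n B → R (kernel g) := by
    intro n
    induction n with
    | zero =>
      intro E B g hg hE hB hsum
      have hz := sumInd_zero hsum
      have hcond : 𝟙 E ≫ g = 0 := hz.eq_of_tgt _ _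
      have hsec : kernel.lift g (𝟙 E) hcond ≫ kernel.ι g = 𝟙 E := kernel.lift_ι _ _ _
      haveI : IsSplitEpi (kernel.ι g) := ⟨⟨⟨kernel.lift g (𝟙 E) hcond, hsec⟩⟩⟩
      haveI : IsIso (kernel.ι g) := isIso_of_mono_of_epi _
      exact hR.1 (asIso (kernel.ι g)).symm hE
    | succ n ih =>
      intro E B g hg hE hB hsum
      obtain ⟨B₁, B₂, hB₁, hsum₂, ⟨e⟩⟩ := sumInd_succ hsum
      obtain ⟨hRB₁, hRB₂⟩ := hR.2.2 (hR.1 e hB)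
      haveI : Epi g := hg
      haveI : Epi (e.hom ≫ biprod.snd : B ⟶ B₂) := epi_comp _ _
      haveI : Epi (g ≫ (e.hom ≫ biprod.snd)) := epi_comp _ _
      have hK' : R (kernel (g ≫ (e.hom ≫ biprod.snd))) :=
        ih E B₂ _ inferInstance hE hRB₂ hsum₂
      obtain ⟨eK⟩ := nonempty_iso_kernel (shortExact_splitL e)
      have hses := (lemA g (e.hom ≫ biprod.snd)).iso (Iso.refl _) (Iso.refl _) eK.symm
      obtain ⟨S', hS', e1, e2, e3⟩ := hses
      have h2' : R S'.X₂ := by rw [e2]; exact hK'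
      have h3' : R S'.X₃ := by rw [e3]; exact hRB₁
      have hi3 : Indecomposable S'.X₃ := by rw [e3]; exact hB₁
      have hres := h3 S' hS' h2' h3' hi3
      rw [e1] at hres
      exact hres
  intro S hS h₂ h₃
  obtain ⟨n, hsum⟩ := ks_sumInd hKS S.X₃
  haveI := hS.epi_g
  have hker := aux n _ _ S.g inferInstance h₂ h₃ hsum
  obtain ⟨eI⟩ := nonempty_iso_kernel hS
  exact hR.1 eI.symm hker

lemma extAux1 (hKS : IsKrullSchmidtCat C) (hR : IsAdditiveSubcat R)
    (h2 : ∀ S : ShortComplex C, S.ShortExact → R S.X₁ → Indecomposable S.X₁ → R S.X₃ →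
      Indecomposable S.X₃ → R S.X₂)
    (hker : ClosedUnderKernelsOfEpis R) :
    ∀ (m : ℕ) (S : ShortComplex C), S.ShortExact → SumInd m S.X₁ → R S.X₁ → R S.X₃ →
      Indecomposable S.X₃ → R S.X₂ := by
  intro m
  induction m with
  | zero =>
    intro S hS hsum h1 h3 hi3
    obtain ⟨eI⟩ := iso_of_isZero_X₁ hS (sumInd_zero hsum)
    exact hR.1 eI.symm h3
  | succ n ih =>
    rcases n with _ | j
    · intro S hS hsum h1 h3 hi3
      exact h2 S hS h1 (sumInd_one hsum) h3 hi3
    · intro S hS hsum h1 h3 hi3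
      obtain ⟨A₁, A₂, hA₁, hsum₂, ⟨e⟩⟩ := sumInd_succ hsum
      obtain ⟨hRA₁, hRA₂⟩ := hR.2.2 (hR.1 e h1)
      haveI := hS.mono_f
      obtain ⟨eC⟩ := nonempty_iso_cokernel hS
      obtain ⟨eA1⟩ := nonempty_iso_cokernel (shortExact_splitR e)
      obtain ⟨eA2⟩ := nonempty_iso_cokernel (shortExact_splitL e)
      have hs₁ := (lemB (biprod.inr ≫ e.inv) S.f).iso eA1.symm (Iso.refl _) eC.symm
      obtain ⟨S₁, hS₁, f1, f2, f3⟩ := hs₁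
      have hE₁ : R (cokernel ((biprod.inr ≫ e.inv) ≫ S.f)) := by
        have hres := h2 S₁ hS₁ (by rw [f1]; exact hRA₁) (by rw [f1]; exact hA₁)
          (by rw [f3]; exact h3) (by rw [f3]; exact hi3)
        rw [f2] at hres; exact hres
      have hs₂ := (lemB (biprod.inl ≫ e.inv) S.f).iso eA2.symm (Iso.refl _) eC.symm
      obtain ⟨S₂, hS₂, g1, g2, g3⟩ := hs₂
      have hE₂ : R (cokernel ((biprod.inl ≫ e.inv) ≫ S.f)) := by
        have hres := ih S₂ hS₂ (by rw [g1]; exact hsum₂) (by rw [g1]; exact hRA₂)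
          (by rw [g3]; exact h3) (by rw [g3]; exact hi3)
        rw [g2] at hres; exact hres
      obtain ⟨S₃, hS₃, k1, k2, k3⟩ := lemMV e S.f
      have h2' : R S₃.X₂ := by rw [k2]; exact hR.2.1 hE₁ hE₂
      have h3' : R S₃.X₃ := by rw [k3]; exact hR.1 eC h3
      have hres := hker S₃ hS₃ h2' h3'
      rw [k1] at hres; exact hres

lemma extClosed (hKS : IsKrullSchmidtCat C) (hR : IsAdditiveSubcat R)
    (h2 : ∀ S : ShortComplex C, S.ShortExact → R S.X₁ → Indecomposable S.X₁ → R S.X₃ →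
      Indecomposable S.X₃ → R S.X₂)
    (h3 : ∀ S : ShortComplex C, S.ShortExact → R S.X₂ → R S.X₃ → Indecomposable S.X₃ →
      R S.X₁) :
    ClosedUnderExtensions R := by
  have hker := kerClosed hKS hR h3
  have aux1 := extAux1 hKS hR h2 hker
  have aux2 : ∀ (n : ℕ) (S : ShortComplex C), S.ShortExact → R S.X₁ → R S.X₃ →
      SumInd n S.X₃ → R S.X₂ := by
    intro n
    induction n with
    | zero =>
      intro S hS h1 h3' hsum
      obtain ⟨eI⟩ := iso_of_isZero_X₃ hS (sumInd_zero hsum)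
      exact hR.1 eI h1
    | succ n ih =>
      intro S hS h1 h3' hsum
      obtain ⟨B₁, B₂, hB₁, hsum₂, ⟨e⟩⟩ := sumInd_succ hsum
      obtain ⟨hRB₁, hRB₂⟩ := hR.2.2 (hR.1 e h3')
      haveI := hS.epi_g
      haveI : Epi (e.hom ≫ biprod.fst : S.X₃ ⟶ B₁) := epi_comp _ _
      obtain ⟨eK1⟩ := nonempty_iso_kernel hS
      obtain ⟨eK2⟩ := nonempty_iso_kernel (shortExact_splitR e)
      have hs := (lemA S.g (e.hom ≫ biprod.fst)).iso eK1.symm (Iso.refl _) eK2.symm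
      obtain ⟨S', hS', e1, e2, e3⟩ := hs
      have hK : R (kernel (S.g ≫ (e.hom ≫ biprod.fst))) := by
        have hres := ih S' hS' (by rw [e1]; exact h1) (by rw [e3]; exact hRB₂)
          (by rw [e3]; exact hsum₂)
        rw [e2] at hres; exact hres
      haveI : Epi (S.g ≫ (e.hom ≫ biprod.fst)) := epi_comp _ _
      have hses2 := ses3_of (kernel.ι (S.g ≫ (e.hom ≫ biprod.fst)))
        (S.g ≫ (e.hom ≫ biprod.fst)) (kernel.condition _) (shortExact_kernel _)
      obtain ⟨S'', hS'', m1, m2, m3⟩ := hses2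
      obtain ⟨mK, hsumK⟩ := ks_sumInd hKS (kernel (S.g ≫ (e.hom ≫ biprod.fst)))
      have hres := aux1 mK S'' hS'' (by rw [m1]; exact hsumK) (by rw [m1]; exact hK)
        (by rw [m3]; exact hRB₁) (by rw [m3]; exact hB₁)
      rw [m2] at hres; exact hres
  intro S hS h1 h3'
  obtain ⟨n, hsum⟩ := ks_sumInd hKS S.X₃
  exact aux2 n S hS h1 h3' hsum

end MainLemmas

end Stmt8Aux



/-- In a Krull–Schmidt abelian category with enough projectives, an additive
subcategory is resolving if and only if it contains the projectives (`R'1`), is closed under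
extensions with indecomposable outer terms (`R'2`), and is closed under kernels of epimorphisms
onto indecomposable objects (`R'3`). -/
theorem isResolving_iff_restricted_conditions
    (C : Type u) [Category.{v} C] [Abelian C] [EnoughProjectives C]
    (hKS : IsKrullSchmidtCat C) (R : C → Prop) (hR : IsAdditiveSubcat R) :
    IsResolving R ↔
      ((∀ X : C, Projective X → R X) ∧
       (∀ S : ShortComplex C, S.ShortExact →
          R S.X₁ → Indecomposable S.X₁ → R S.X₃ → Indecomposable S.X₃ → R S.X₂) ∧
       (∀ S : ShortComplex C, S.ShortExact → R S.X₂ → R S.X₃ → Indecomposable S.X₃ →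
          R S.X₁)) := by
  constructor
  · rintro ⟨hAdd, hGen, hExt, hKer⟩
    refine ⟨?_, fun S hS h1 _ h3 _ => hExt S hS h1 h3,
      fun S hS h2' h3' _ => hKer S hS h2' h3'⟩
    intro X hX
    obtain ⟨G, f, hG, hf⟩ := hGen X
    haveI := hf
    haveI := hX
    have hfac : Projective.factorThru (𝟙 X) f ≫ f = 𝟙 X := Projective.factorThru_comp _ _
    have hSE := Stmt8Aux.shortExact_kernel f
    have hsplit : (ShortComplex.mk (kernel.ι f) f (kernel.condition f)).Splitting :=
      ShortComplex.Splitting.ofExactOfSection _ hSE.exact (Projective.factorThru (𝟙 X) f)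
        hfac hSE.mono_f
    have e := hsplit.isoBinaryBiproduct
    exact (hAdd.2.2 (hAdd.1 e hG)).2
  · rintro ⟨h1, h2, h3⟩
    refine ⟨hR, ?_, Stmt8Aux.extClosed hKS hR h2 h3, Stmt8Aux.kerClosed hKS hR h3⟩
    intro X
    exact ⟨Projective.over X, Projective.π X, h1 _ inferInstance, inferInstance⟩
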